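/- arXiv:2309.05199 — 7 statements merged into one kernel-verified Lean document; each statement's English description precedes it below -/
import Mathlib

section
/- Let G be a (P₃∪P₂, K₄)-free graph and let D₁ := {x ∈ V(G) : ω(G − N(x)) ≤ 2}. If the induced subgraph G[D₁] contains P₂∪P₁ (i.e., there are vertices v₁, v₂, v₃ ∈ D₁ with v₁ adjacent to v₂ and v₃ adjacent to neither v₁ nor v₂), then χ(G) ≤ 7. -/
open SimpleGraph

/-- `G` contains `H`, i.e. `H` is isomorphic to an induced subgraph of `G`. -/
def Contains {V W : Type*} (G : SimpleGraph V) (H : SimpleGraph W) : Prop :=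
  Nonempty (H ↪g G)

/-- The path `P₃` on 3 vertices. -/
def P3 : SimpleGraph (Fin 3) := fromEdgeSet {s(0,1), s(1,2)}

/-- The disjoint union `P₃ ∪ P₂` on 5 vertices. -/
def P3P2 : SimpleGraph (Fin 5) := fromEdgeSet {s(0,1), s(1,2), s(3,4)}

/-- The disjoint union `K₃ ∪ P₂` on 5 vertices. -/
def K3P2 : SimpleGraph (Fin 5) := fromEdgeSet {s(0,1), s(0,2), s(1,2), s(3,4)}

/-- co-domino: the 6-cycle u₁v₁v₂v₃u₃u₂ (vertices 0 1 2 3 4 5) plus the edges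
v₁v₃ and u₁u₃. -/
def coDomino : SimpleGraph (Fin 6) :=
  fromEdgeSet {s(0,1), s(1,2), s(2,3), s(3,4), s(4,5), s(5,0), s(1,3), s(0,4)}

/-- co-A: the 6-cycle u₁v₁v₂v₃u₃u₂ (vertices 0 1 2 3 4 5) plus the edges
v₁v₃, u₁u₃ and u₁v₃. -/
def coA : SimpleGraph (Fin 6) :=
  fromEdgeSet {s(0,1), s(1,2), s(2,3), s(3,4), s(4,5), s(5,0), s(1,3), s(0,4), s(0,3)}

/-- χ37: the 6-cycle u₁v₁v₂v₃u₃u₂ (vertices 0 1 2 3 4 5) plus the single edge v₁v₃. -/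
def chi37 : SimpleGraph (Fin 6) :=
  fromEdgeSet {s(0,1), s(1,2), s(2,3), s(3,4), s(4,5), s(5,0), s(1,3)}

/-- X₁: the 6-cycle v₁v₂v₃u₃u₂u₁ (vertices 0 1 2 3 4 5) plus the edge v₁v₃,
together with a new vertex u = 6 and the edges uv₁ and uu₂. -/
def X1 : SimpleGraph (Fin 7) :=
  fromEdgeSet {s(0,1), s(1,2), s(2,3), s(3,4), s(4,5), s(5,0), s(0,2), s(6,0), s(6,4)}

/-- X₂: the 6-cycle v₁v₂v₃u₃u₂u₁ (vertices 0 1 2 3 4 5) plus the edges v₁v₃, v₃u₁, u₁u₃,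
together with a new vertex u = 6 and the edges uv₂ and uu₂. -/
def X2 : SimpleGraph (Fin 7) :=
  fromEdgeSet {s(0,1), s(1,2), s(2,3), s(3,4), s(4,5), s(5,0), s(0,2), s(2,5), s(3,5),
    s(6,1), s(6,4)}

/-- co-twin-C₅: the 5-cycle v₁v₂v₃v₄v₅ (vertices 0 1 2 3 4) plus a new vertex v₆ = 5
adjacent exactly to v₃, v₄ and v₅. -/
def coTwinC5 : SimpleGraph (Fin 6) :=
  fromEdgeSet {s(0,1), s(1,2), s(2,3), s(3,4), s(4,0), s(2,5), s(3,5), s(4,5)}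

/-- `D₁ = {x : ω(G − N(x)) ≤ 2}`, where `G − N(x)` is the subgraph induced on the
vertices not adjacent to `x` (including `x` itself). -/
def D1 {V : Type*} (G : SimpleGraph V) : Set V :=
  {x : V | (G.induce {y : V | ¬ G.Adj x y}).cliqueNum ≤ 2}

/-- `M(v)`: the set of vertices distinct from `v` and nonadjacent to `v`. -/
def Mset {V : Type*} (G : SimpleGraph V) (v : V) : Set V :=
  {u : V | u ≠ v ∧ ¬ G.Adj v u}

lemma contains_P3P2 {V : Type*} (G : SimpleGraph V) (x y z a b : V)
    (hxy : G.Adj x y) (hyz : G.Adj y z) (hxz : ¬ G.Adj x z) (hab : G.Adj a b)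
    (hax : ¬ G.Adj a x) (hay : ¬ G.Adj a y) (haz : ¬ G.Adj a z)
    (hbx : ¬ G.Adj b x) (hby : ¬ G.Adj b y) (hbz : ¬ G.Adj b z)
    (dax : a ≠ x) (day : a ≠ y) (daz : a ≠ z)
    (dbx : b ≠ x) (dby : b ≠ y) (dbz : b ≠ z) (dxz : x ≠ z) :
    Contains G P3P2 := by
  have dxy : x ≠ y := hxy.ne
  have dyz : y ≠ z := hyz.ne
  have dab : a ≠ b := hab.ne
  have hyx := hxy.symm
  have hzy := hyz.symm
  have hba := hab.symm
  have hzx : ¬ G.Adj z x := fun h => hxz h.symm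
  have hxa : ¬ G.Adj x a := fun h => hax h.symm
  have hya : ¬ G.Adj y a := fun h => hay h.symm
  have hza : ¬ G.Adj z a := fun h => haz h.symm
  have hxb : ¬ G.Adj x b := fun h => hbx h.symm
  have hyb : ¬ G.Adj y b := fun h => hby h.symm
  have hzb : ¬ G.Adj z b := fun h => hbz h.symm
  have dyx := dxy.symm; have dzy := dyz.symm; have dba := dab.symm
  have dzx := dxz.symm
  have dxa := dax.symm; have dya := day.symm; have dza := daz.symm
  have dxb := dbx.symm; have dyb := dby.symm; have dzb := dbz.symm
  refine ⟨⟨⟨![x,y,z,a,b], ?_⟩, ?_⟩⟩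
  · intro i j h
    fin_cases i <;> fin_cases j <;> simp_all
  · intro i j
    change G.Adj (![x,y,z,a,b] i) (![x,y,z,a,b] j) ↔ _
    fin_cases i <;> fin_cases j <;> simp_all [P3P2]


lemma contains_K4 {V : Type*} (G : SimpleGraph V) (a b c d : V)
    (hab : G.Adj a b) (hac : G.Adj a c) (had : G.Adj a d)
    (hbc : G.Adj b c) (hbd : G.Adj b d) (hcd : G.Adj c d) :
    Contains G (completeGraph (Fin 4)) := by
  have dab := hab.ne; have dac := hac.ne; have dad := had.ne
  have dbc := hbc.ne; have dbd := hbd.ne; have dcd := hcd.ne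
  have hba := hab.symm; have hca := hac.symm; have hda := had.symm
  have hcb := hbc.symm; have hdb := hbd.symm; have hdc := hcd.symm
  have dba := dab.symm; have dca := dac.symm; have dda := dad.symm
  have dcb := dbc.symm; have ddb := dbd.symm; have ddc := dcd.symm
  refine ⟨⟨⟨![a,b,c,d], ?_⟩, ?_⟩⟩
  · intro i j h
    fin_cases i <;> fin_cases j <;> simp_all
  · intro i j
    change G.Adj (![a,b,c,d] i) (![a,b,c,d] j) ↔ _
    fin_cases i <;> fin_cases j <;> simp_all [completeGraph]

lemma triangle_cliqueNum {V : Type*} [Fintype V] (G : SimpleGraph V) (S : Set V)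
    (x y z : V) (hx : x ∈ S) (hy : y ∈ S) (hz : z ∈ S)
    (hxy : G.Adj x y) (hyz : G.Adj y z) (hxz : G.Adj x z)
    (h : (G.induce S).cliqueNum ≤ 2) : False := by
  classical
  haveI : Fintype ↥S := Fintype.ofFinite ↥S
  have hclique : (G.induce S).IsClique ({⟨x,hx⟩, ⟨y,hy⟩, ⟨z,hz⟩} : Finset ↥S) := by
    intro u hu w hw huw
    simp only [Finset.coe_insert, Set.mem_insert_iff, Finset.coe_singleton,
      Set.mem_singleton_iff] at hu hw
    rcases hu with rfl|rfl|rfl <;> rcases hw with rfl|rfl|rfl <;>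
      first
        | exact absurd rfl huw
        | simp [SimpleGraph.comap_adj, hxy, hyz, hxz, hxy.symm, hyz.symm, hxz.symm]
  have hcard : ({⟨x,hx⟩, ⟨y,hy⟩, ⟨z,hz⟩} : Finset ↥S).card = 3 := by
    rw [Finset.card_insert_of_notMem, Finset.card_insert_of_notMem, Finset.card_singleton] <;>
      simp [Subtype.ext_iff, hxy.ne, hyz.ne, hxz.ne]
  have := hclique.card_le_cliqueNum
  omega


theorem chromatic_le_seven_of_P2P1_in_D1 {V : Type*} [Fintype V] (G : SimpleGraph V)
    (hP : ¬ Contains G P3P2) (hK : ¬ Contains G (completeGraph (Fin 4)))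
    (v₁ v₂ v₃ : V) (hv₁ : v₁ ∈ D1 G) (hv₂ : v₂ ∈ D1 G) (hv₃ : v₃ ∈ D1 G)
    (hadj : G.Adj v₁ v₂) (h31 : v₃ ≠ v₁) (h32 : v₃ ≠ v₂)
    (hn1 : ¬ G.Adj v₃ v₁) (hn2 : ¬ G.Adj v₃ v₂) :
    G.chromaticNumber ≤ 7 := by
  classical
  -- triangle-freeness facts
  have tri1 : ∀ x y z : V, ¬ G.Adj v₁ x → ¬ G.Adj v₁ y → ¬ G.Adj v₁ z →
      G.Adj x y → G.Adj y z → G.Adj x z → False := fun x y z hx hy hz a b c =>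
    triangle_cliqueNum G _ x y z hx hy hz a b c hv₁
  have tri2 : ∀ x y z : V, ¬ G.Adj v₂ x → ¬ G.Adj v₂ y → ¬ G.Adj v₂ z →
      G.Adj x y → G.Adj y z → G.Adj x z → False := fun x y z hx hy hz a b c =>
    triangle_cliqueNum G _ x y z hx hy hz a b c hv₂
  have tri3 : ∀ x y z : V, ¬ G.Adj v₃ x → ¬ G.Adj v₃ y → ¬ G.Adj v₃ z →
      G.Adj x y → G.Adj y z → G.Adj x z → False := fun x y z hx hy hz a b c =>
    triangle_cliqueNum G _ x y z hx hy hz a b c hv₃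
  have hK4 : ∀ p q : V, G.Adj v₁ p → G.Adj v₁ q → G.Adj v₂ p → G.Adj v₂ q →
      G.Adj p q → False := fun p q h1p h1q h2p h2q hpq =>
    hK (contains_K4 G v₁ v₂ p q hadj h1p h1q h2p h2q hpq)
  -- the common non-neighborhood of v₁, v₂
  set Cp : V → Prop := fun u => ¬ G.Adj v₁ u ∧ ¬ G.Adj v₂ u with hCp
  -- each vertex of C' has at most one neighbor in C'
  have uniq : ∀ w y z : V, Cp w → Cp y → Cp z → G.Adj w y → G.Adj w z → y ≠ z → False := by
    intro w y z hw hy hz hwy hwz hyz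
    by_cases hadjyz : G.Adj y z
    · exact tri1 y w z hy.1 hw.1 hz.1 hwy.symm hwz hadjyz
    · refine hP (contains_P3P2 G y w z v₁ v₂ hwy.symm hwz hadjyz hadj
        hy.1 hw.1 hz.1 hy.2 hw.2 hz.2 ?_ ?_ ?_ ?_ ?_ ?_ hyz)
      · rintro rfl; exact hy.2 hadj.symm
      · rintro rfl; exact hw.2 hadj.symm
      · rintro rfl; exact hz.2 hadj.symm
      · rintro rfl; exact hy.1 hadj
      · rintro rfl; exact hw.1 hadj
      · rintro rfl; exact hz.1 hadj
  set n : V → ℕ := fun v => ((Fintype.equivFin V) v : ℕ) with hn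
  have ninj : ∀ p q : V, n p = n q → p = q := by
    intro p q h
    exact (Fintype.equivFin V).injective (Fin.val_injective h)
  have hcol : G.Colorable 7 := by
    refine ⟨Coloring.mk (fun v =>
      if G.Adj v₁ v then
        (if G.Adj v₂ v then 2 else if G.Adj v₃ v then 3 else 4)
      else if G.Adj v₂ v then
        (if G.Adj v₃ v then 5 else 6)
      else (if ∃ u, Cp u ∧ G.Adj v u ∧ n u < n v then 1 else 0)) ?_⟩
    intro p q hpq heq
    by_cases h1p : G.Adj v₁ p <;> by_cases h2p : G.Adj v₂ p <;>
      by_cases h1q : G.Adj v₁ q <;> by_cases h2q : G.Adj v₂ q <;>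
      simp only [h1p, h2p, h1q, h2q, if_true, if_false] at heq
    -- now 16 branches
    · exact hK4 p q h1p h1q h2p h2q hpq                 -- TT TT
    · revert heq; split_ifs <;> decide                   -- TT TF
    · revert heq; split_ifs <;> decide                   -- TT FT
    · revert heq; split_ifs <;> decide                   -- TT FF
    · revert heq; split_ifs <;> decide                   -- TF TT
    · -- TF TF : p,q ~v₁, ≁v₂
      by_cases h3p : G.Adj v₃ p <;> by_cases h3q : G.Adj v₃ q <;>
        simp only [h3p, h3q, if_true, if_false] at heq
      · exact tri2 v₃ p q (fun h => hn2 h.symm) h2p h2q h3p hpq h3q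
      · exact absurd heq (by decide)
      · exact absurd heq (by decide)
      · exact tri3 v₁ p q hn1 h3p h3q h1p hpq h1q
    · revert heq; split_ifs <;> decide                   -- TF FT
    · revert heq; split_ifs <;> decide                   -- TF FF
    · revert heq; split_ifs <;> decide                   -- FT TT
    · revert heq; split_ifs <;> decide                   -- FT TF
    · -- FT FT : p,q ~v₂, ≁v₁
      by_cases h3p : G.Adj v₃ p <;> by_cases h3q : G.Adj v₃ q <;>
        simp only [h3p, h3q, if_true, if_false] at heq
      · exact tri1 v₃ p q (fun h => hn1 h.symm) h1p h1q h3p hpq h3q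
      · exact absurd heq (by decide)
      · exact absurd heq (by decide)
      · exact tri3 v₂ p q hn2 h3p h3q h2p hpq h2q
    · revert heq; split_ifs <;> decide                   -- FT FF
    · revert heq; split_ifs <;> decide                   -- FF TT
    · revert heq; split_ifs <;> decide                   -- FF TF
    · revert heq; split_ifs <;> decide                   -- FF FT
    · -- FF FF : both in C'
      have hCq : Cp q := ⟨h1q, h2q⟩
      have hCpp : Cp p := ⟨h1p, h2p⟩
      rcases lt_trichotomy (n p) (n q) with hlt | heqn | hlt
      · have hp' : ∃ u, Cp u ∧ G.Adj p u ∧ n u < n p := by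
          by_contra hno
          rw [if_neg hno, if_pos ⟨p, hCpp, hpq.symm, hlt⟩] at heq
          exact absurd heq (by decide)
        obtain ⟨u, hu, hup, hult⟩ := hp'
        have huq : u ≠ q := by rintro rfl; omega
        exact uniq p u q hCpp hu hCq hup hpq huq
      · exact hpq.ne (ninj p q heqn)
      · have hq' : ∃ u, Cp u ∧ G.Adj q u ∧ n u < n q := by
          by_contra hno
          rw [if_pos ⟨q, hCq, hpq, hlt⟩, if_neg hno] at heq
          exact absurd heq (by decide)
        obtain ⟨u, hu, huq, hult⟩ := hq'
        have hup : u ≠ p := by rintro rfl; omega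
        exact uniq q u p hCq hu hCpp huq hpq.symm hup
  have h7 := hcol.chromaticNumber_le
  exact_mod_cast h7
end

section
/- Let G be a (P₃∪P₂, K₄)-free graph. If G contains P₂∪K₃ (i.e., G has an edge whose endpoints are both nonadjacent to all three vertices of some triangle of G), then χ(G) ≤ 6. -/
open SimpleGraph

open scoped Classical

private lemma P3P2_adj' : ∀ i j : Fin 5, P3P2.Adj i j ↔
    ((i=0∧j=1)∨(i=1∧j=0)∨(i=1∧j=2)∨(i=2∧j=1)∨(i=3∧j=4)∨(i=4∧j=3)) := by
  intro i j
  simp [P3P2, Sym2.eq_iff]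
  aesop

section Helpers
variable {V : Type*} {G : SimpleGraph V}

private lemma aux_K4 (w : Fin 4 → V) (h : ∀ i j, i ≠ j → G.Adj (w i) (w j)) :
    Contains G (completeGraph (Fin 4)) := by
  have hinj : Function.Injective w := by
    intro i j hij
    by_contra hne
    exact G.irrefl (hij ▸ h i j hne)
  refine ⟨⟨⟨w, hinj⟩, ?_⟩⟩
  intro i j
  constructor
  · intro hadj
    simp only [completeGraph, top_adj]
    intro hh
    exact G.irrefl (hh ▸ hadj)
  · intro hh
    exact h i j (by simpa [completeGraph] using hh)

private lemma aux_P3P2 (v0 v1 v2 v3 v4 : V)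
    (h01 : G.Adj v0 v1) (h12 : G.Adj v1 v2) (h34 : G.Adj v3 v4)
    (n02 : ¬ G.Adj v0 v2) (n03 : ¬ G.Adj v0 v3) (n04 : ¬ G.Adj v0 v4)
    (n13 : ¬ G.Adj v1 v3) (n14 : ¬ G.Adj v1 v4)
    (n23 : ¬ G.Adj v2 v3) (n24 : ¬ G.Adj v2 v4)
    (ne02 : v0 ≠ v2) : Contains G P3P2 := by
  have h10 := h01.symm
  have h21 := h12.symm
  have h43 := h34.symm
  have n20 : ¬ G.Adj v2 v0 := fun h => n02 h.symm
  have n30 : ¬ G.Adj v3 v0 := fun h => n03 h.symm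
  have n40 : ¬ G.Adj v4 v0 := fun h => n04 h.symm
  have n31 : ¬ G.Adj v3 v1 := fun h => n13 h.symm
  have n41 : ¬ G.Adj v4 v1 := fun h => n14 h.symm
  have n32 : ¬ G.Adj v3 v2 := fun h => n23 h.symm
  have n42 : ¬ G.Adj v4 v2 := fun h => n24 h.symm
  have ne01 : v0 ≠ v1 := G.ne_of_adj h01
  have ne12 : v1 ≠ v2 := G.ne_of_adj h12
  have ne34 : v3 ≠ v4 := G.ne_of_adj h34
  have ne03 : v0 ≠ v3 := fun h => n04 (h ▸ h34)
  have ne04 : v0 ≠ v4 := fun h => n03 (h ▸ h34.symm)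
  have ne13 : v1 ≠ v3 := fun h => n14 (h ▸ h34)
  have ne14 : v1 ≠ v4 := fun h => n13 (h ▸ h34.symm)
  have ne23 : v2 ≠ v3 := fun h => n24 (h ▸ h34)
  have ne24 : v2 ≠ v4 := fun h => n23 (h ▸ h34.symm)
  refine ⟨⟨⟨![v0,v1,v2,v3,v4], ?_⟩, @fun i j => ?_⟩⟩
  · intro i j hij
    fin_cases i <;> fin_cases j <;> simp_all
  · rw [P3P2_adj']
    show G.Adj (![v0,v1,v2,v3,v4] i) (![v0,v1,v2,v3,v4] j) ↔ _
    fin_cases i <;> fin_cases j <;> simp_all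

private lemma lemA {u v w1 w2 x : V} (hP : ¬ Contains G P3P2)
    (huv : G.Adj u v) (h12 : G.Adj w1 w2)
    (hu1 : ¬G.Adj u w1) (hu2 : ¬G.Adj u w2) (hv1 : ¬G.Adj v w1) (hv2 : ¬G.Adj v w2)
    (hxu : ¬G.Adj x u) (hxv : ¬G.Adj x v)
    (hx1 : G.Adj x w1) (hx2 : ¬G.Adj x w2) (hxe : x ≠ w2) : False :=
  hP (aux_P3P2 x w1 w2 u v hx1 h12 huv hx2 hxu hxv
    (fun h => hu1 h.symm) (fun h => hv1 h.symm) (fun h => hu2 h.symm) (fun h => hv2 h.symm) hxe)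

private lemma lemB {u v x y d : V} (hP : ¬ Contains G P3P2)
    (huv : G.Adj u v)
    (hud : ¬G.Adj u d) (hvd : ¬G.Adj v d)
    (hxu : ¬G.Adj x u) (hxv : ¬G.Adj x v) (hxd : G.Adj x d)
    (hyx : G.Adj y x) (hyd : ¬G.Adj y d)
    (hyu : ¬G.Adj y u) (hyv : ¬G.Adj y v) (hyned : y ≠ d) : False :=
  hP (aux_P3P2 y x d u v hyx hxd huv hyd hyu hyv hxu hxv
    (fun h => hud h.symm) (fun h => hvd h.symm) hyned)


private lemma aux_K4' (p q r s : V)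
    (h1 : G.Adj p q) (h2 : G.Adj p r) (h3 : G.Adj p s)
    (h4 : G.Adj q r) (h5 : G.Adj q s) (h6 : G.Adj r s) :
    Contains G (completeGraph (Fin 4)) := by
  have h1' := h1.symm; have h2' := h2.symm; have h3' := h3.symm
  have h4' := h4.symm; have h5' := h5.symm; have h6' := h6.symm
  refine aux_K4 ![p, q, r, s] ?_
  intro i j hij
  fin_cases i <;> fin_cases j <;> simp_all

end Helpers

section Main
variable {V : Type*} [Fintype V]

private def qp (G : SimpleGraph V) (a b c d e x : V) : Prop :=
  ¬(G.Adj x a ∧ G.Adj x b) ∧ ¬(G.Adj x b ∧ G.Adj x c) ∧ ¬(G.Adj x a ∧ G.Adj x c) ∧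
  x ≠ d ∧ x ≠ e ∧ ¬ G.Adj x d ∧ ¬ G.Adj x e

private noncomputable def ordf : V → ℕ := fun v => ((Fintype.equivFin V) v : ℕ)

private lemma ordf_inj : Function.Injective (ordf (V := V)) := by
  intro i j hij
  exact (Fintype.equivFin V).injective (Fin.val_injective hij)

private noncomputable def idxf (G : SimpleGraph V) (a b c d e x : V) : ℕ :=
  (Finset.univ.filter (fun z => qp G a b c d e z ∧ G.Adj z x ∧ ordf z < ordf x)).card

private noncomputable def colf (G : SimpleGraph V) (a b c d e x : V) : Fin 6 :=
  if G.Adj x a ∧ G.Adj x b then 0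
  else if G.Adj x b ∧ G.Adj x c then 1
  else if G.Adj x a ∧ G.Adj x c then 2
  else if x = d then 3
  else if x = e then 4
  else if G.Adj x d ∨ G.Adj x e then 5
  else ⟨3 + min (idxf G a b c d e x) 2, by omega⟩

private lemma colf_cases (G : SimpleGraph V) (a b c d e x : V) :
    ((colf G a b c d e x).val = 0 ∧ (G.Adj x a ∧ G.Adj x b)) ∨
    ((colf G a b c d e x).val = 1 ∧ (G.Adj x b ∧ G.Adj x c)) ∨
    ((colf G a b c d e x).val = 2 ∧ (G.Adj x a ∧ G.Adj x c)) ∨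
    ((colf G a b c d e x).val = 3 ∧ x = d) ∨
    ((colf G a b c d e x).val = 4 ∧ x = e) ∨
    ((colf G a b c d e x).val = 5 ∧
      (¬(G.Adj x a ∧ G.Adj x b) ∧ ¬(G.Adj x b ∧ G.Adj x c) ∧ ¬(G.Adj x a ∧ G.Adj x c) ∧
        x ≠ d ∧ x ≠ e ∧ (G.Adj x d ∨ G.Adj x e))) ∨
    ((colf G a b c d e x).val = 3 + min (idxf G a b c d e x) 2 ∧ qp G a b c d e x) := by
  unfold colf
  split_ifs with h0 h1 h2 h3 h4 h5
  · exact Or.inl ⟨rfl, h0⟩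
  · exact Or.inr (Or.inl ⟨rfl, h1⟩)
  · exact Or.inr (Or.inr (Or.inl ⟨rfl, h2⟩))
  · exact Or.inr (Or.inr (Or.inr (Or.inl ⟨rfl, h3⟩)))
  · exact Or.inr (Or.inr (Or.inr (Or.inr (Or.inl ⟨rfl, h4⟩))))
  · exact Or.inr (Or.inr (Or.inr (Or.inr (Or.inr (Or.inl ⟨rfl, h0, h1, h2, h3, h4, h5⟩)))))
  · exact Or.inr (Or.inr (Or.inr (Or.inr (Or.inr (Or.inr ⟨rfl,
      h0, h1, h2, h3, h4, fun hh => h5 (Or.inl hh), fun hh => h5 (Or.inr hh)⟩)))))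

end Main

section Main2
variable {V : Type*} [Fintype V]

private lemma mainCore (G : SimpleGraph V)
    (hP : ¬ Contains G P3P2) (hK : ¬ Contains G (completeGraph (Fin 4)))
    (a b c d e : V)
    (hab : G.Adj a b) (hac : G.Adj a c) (hbc : G.Adj b c) (hde : G.Adj d e)
    (had : ¬ G.Adj a d) (hae : ¬ G.Adj a e) (hbd : ¬ G.Adj b d) (hbe : ¬ G.Adj b e)
    (hcd : ¬ G.Adj c d) (hce : ¬ G.Adj c e) :
    G.chromaticNumber ≤ 6 := by
  have hqT : ∀ x, qp G a b c d e x → ¬G.Adj x a ∧ ¬G.Adj x b ∧ ¬G.Adj x c := by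
    rintro x ⟨h1, h2, h3, _, _, hnd, hne⟩
    refine ⟨fun hxa => ?_, fun hxb => ?_, fun hxc => ?_⟩
    · have hxb : ¬ G.Adj x b := fun hh => h1 ⟨hxa, hh⟩
      have hxc : ¬ G.Adj x c := fun hh => h3 ⟨hxa, hh⟩
      have hnexb : x ≠ b := fun hh => (hh ▸ hxc) hbc
      exact hP (aux_P3P2 x a b d e hxa hab hde hxb hnd hne had hae hbd hbe hnexb)
    · have hxa : ¬ G.Adj x a := fun hh => h1 ⟨hh, hxb⟩
      have hxc : ¬ G.Adj x c := fun hh => h2 ⟨hxb, hh⟩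
      have hnexc : x ≠ c := fun hh => (hh ▸ hxa) hac.symm
      exact hP (aux_P3P2 x b c d e hxb hbc hde hxc hnd hne hbd hbe hcd hce hnexc)
    · have hxb : ¬ G.Adj x b := fun hh => h2 ⟨hh, hxc⟩
      have hxa : ¬ G.Adj x a := fun hh => h3 ⟨hh, hxc⟩
      have hnexa : x ≠ a := fun hh => (hh ▸ hxb) hab
      exact hP (aux_P3P2 x c a d e hxc hac.symm hde hxa hnd hne hcd hce had hae hnexa)
  have htrans : ∀ x y z, qp G a b c d e x → qp G a b c d e y → qp G a b c d e z →
      G.Adj x y → G.Adj y z → x ≠ z → G.Adj x z := by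
    intro x y z hqx hqy hqz hxy hyz hxz
    by_contra hn
    exact hP (aux_P3P2 x y z d e hxy hyz hde hn
      hqx.2.2.2.2.2.1 hqx.2.2.2.2.2.2 hqy.2.2.2.2.2.1 hqy.2.2.2.2.2.2
      hqz.2.2.2.2.2.1 hqz.2.2.2.2.2.2 hxz)
  have pairT : ∀ x, ¬(G.Adj x a ∧ G.Adj x b) → ¬(G.Adj x b ∧ G.Adj x c) →
      ¬(G.Adj x a ∧ G.Adj x c) →
      ∃ u v, G.Adj u v ∧ ¬G.Adj u d ∧ ¬G.Adj u e ∧ ¬G.Adj v d ∧ ¬G.Adj v e ∧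
        ¬G.Adj x u ∧ ¬G.Adj x v ∧
        (∀ y, ¬G.Adj y a → ¬G.Adj y b → ¬G.Adj y c → (¬G.Adj y u ∧ ¬G.Adj y v)) := by
    intro x h1 h2 h3
    by_cases hxa : G.Adj x a
    · exact ⟨b, c, hbc, hbd, hbe, hcd, hce, fun hh => h1 ⟨hxa, hh⟩, fun hh => h3 ⟨hxa, hh⟩,
        fun y _ hb hc => ⟨hb, hc⟩⟩
    · by_cases hxb : G.Adj x b
      · exact ⟨a, c, hac, had, hae, hcd, hce, hxa, fun hh => h2 ⟨hxb, hh⟩,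
          fun y ha _ hc => ⟨ha, hc⟩⟩
      · exact ⟨a, b, hab, had, hae, hbd, hbe, hxa, hxb, fun y ha hb _ => ⟨ha, hb⟩⟩
  have h5 : ∀ x, ¬(G.Adj x a ∧ G.Adj x b) → ¬(G.Adj x b ∧ G.Adj x c) →
      ¬(G.Adj x a ∧ G.Adj x c) → x ≠ d → x ≠ e → (G.Adj x d ∨ G.Adj x e) →
      G.Adj x d ∧ G.Adj x e := by
    intro x h1 h2 h3 hxd hxe hor
    obtain ⟨u, v, huv, hud, hue, hvd, hve, hxu, hxv, -⟩ := pairT x h1 h2 h3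
    constructor
    · by_contra hnd
      rcases hor with h | h
      · exact hnd h
      · exact lemA hP huv hde.symm hue hud hve hvd hxu hxv h hnd hxd
    · by_contra hne
      rcases hor with h | h
      · exact lemA hP huv hde hud hue hvd hve hxu hxv h hne hxe
      · exact hne h
  have hidx : ∀ x, qp G a b c d e x → idxf G a b c d e x ≤ 2 := by
    intro x hqx
    by_contra hgt
    push_neg at hgt
    unfold idxf at hgt
    obtain ⟨z1, z2, z3, hz1, hz2, hz3, h12, h13, h23⟩ := Finset.two_lt_card_iff.mp hgt
    simp only [Finset.mem_filter, Finset.mem_univ, true_and] at hz1 hz2 hz3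
    obtain ⟨hq1, ha1, hl1⟩ := hz1
    obtain ⟨hq2, ha2, hl2⟩ := hz2
    obtain ⟨hq3, ha3, hl3⟩ := hz3
    have A12 : G.Adj z1 z2 := htrans z1 x z2 hq1 hqx hq2 ha1 ha2.symm h12
    have A13 : G.Adj z1 z3 := htrans z1 x z3 hq1 hqx hq3 ha1 ha3.symm h13
    have A23 : G.Adj z2 z3 := htrans z2 x z3 hq2 hqx hq3 ha2 ha3.symm h23
    exact hK (aux_K4' x z1 z2 z3 ha1.symm ha2.symm ha3.symm A12 A13 A23)
  have hmono : ∀ x y, qp G a b c d e x → qp G a b c d e y → G.Adj x y →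
      ordf x < ordf y → idxf G a b c d e x < idxf G a b c d e y := by
    intro x y hqx hqy hadj hord
    have hsub : Finset.univ.filter (fun z => qp G a b c d e z ∧ G.Adj z x ∧ ordf z < ordf x) ⊆
        Finset.univ.filter (fun z => qp G a b c d e z ∧ G.Adj z y ∧ ordf z < ordf y) := by
      intro z hz
      simp only [Finset.mem_filter, Finset.mem_univ, true_and] at hz ⊢
      obtain ⟨hqz, hzx, hlt⟩ := hz
      have hzy : z ≠ y := fun hh => by rw [hh] at hlt; omega
      exact ⟨hqz, htrans z x y hqz hqx hqy hzx hadj hzy, by omega⟩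
    have hmem : x ∈ Finset.univ.filter
        (fun z => qp G a b c d e z ∧ G.Adj z y ∧ ordf z < ordf y) := by
      simp only [Finset.mem_filter, Finset.mem_univ, true_and]
      exact ⟨hqx, hadj, hord⟩
    have hnot : x ∉ Finset.univ.filter
        (fun z => qp G a b c d e z ∧ G.Adj z x ∧ ordf z < ordf x) := by
      simp only [Finset.mem_filter, Finset.mem_univ, true_and]
      rintro ⟨-, -, hlt⟩
      omega
    unfold idxf
    exact Finset.card_lt_card ((Finset.ssubset_iff_of_subset hsub).mpr ⟨x, hmem, hnot⟩)
  refine Colorable.chromaticNumber_le ⟨SimpleGraph.Coloring.mk (colf G a b c d e) ?_⟩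
  intro x y hadj heq
  have heqv : (colf G a b c d e x).val = (colf G a b c d e y).val := congrArg Fin.val heq
  have hxle2 : ∀ z, qp G a b c d e z → min (idxf G a b c d e z) 2 = idxf G a b c d e z := by
    intro z hz
    have := hidx z hz
    omega
  rcases colf_cases G a b c d e x with
      ⟨hcx, hx⟩ | ⟨hcx, hx⟩ | ⟨hcx, hx⟩ | ⟨hcx, hx⟩ | ⟨hcx, hx⟩ | ⟨hcx, hx⟩ | ⟨hcx, hx⟩ <;>
    rcases colf_cases G a b c d e y with
      ⟨hcy, hy⟩ | ⟨hcy, hy⟩ | ⟨hcy, hy⟩ | ⟨hcy, hy⟩ | ⟨hcy, hy⟩ | ⟨hcy, hy⟩ | ⟨hcy, hy⟩ <;>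
    rw [hcx, hcy] at heqv <;>
    try omega
  -- (0,0)
  · exact hK (aux_K4' x y a b hadj hx.1 hx.2 hy.1 hy.2 hab)
  -- (1,1)
  · exact hK (aux_K4' x y b c hadj hx.1 hx.2 hy.1 hy.2 hbc)
  -- (2,2)
  · exact hK (aux_K4' x y a c hadj hx.1 hx.2 hy.1 hy.2 hac)
  -- (3,3)
  · rw [hx, hy] at hadj; exact G.irrefl hadj
  -- (3,6)
  · rw [hx] at hadj; exact hy.2.2.2.2.2.1 hadj.symm
  -- (4,4)
  · rw [hx, hy] at hadj; exact G.irrefl hadj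
  -- (4,6)
  · rw [hx] at hadj; exact hy.2.2.2.2.2.2 hadj.symm
  -- (5,5)
  · obtain ⟨h1x, h2x, h3x, hdx, hex, horx⟩ := hx
    obtain ⟨h1y, h2y, h3y, hdy, hey, hory⟩ := hy
    obtain ⟨hxd, hxe⟩ := h5 x h1x h2x h3x hdx hex horx
    obtain ⟨hyd, hye⟩ := h5 y h1y h2y h3y hdy hey hory
    exact hK (aux_K4' x y d e hadj hxd hxe hyd hye hde)
  -- (5,6)
  · obtain ⟨h1x, h2x, h3x, hdx, hex, horx⟩ := hx
    obtain ⟨hxd, hxe⟩ := h5 x h1x h2x h3x hdx hex horx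
    obtain ⟨u, v, huv, hud, hue, hvd, hve, hxu, hxv, hycl⟩ := pairT x h1x h2x h3x
    obtain ⟨hya, hyb, hyc⟩ := hqT y hy
    obtain ⟨hyu, hyv⟩ := hycl y hya hyb hyc
    exact (lemB hP huv hud hvd hxu hxv hxd hadj.symm hy.2.2.2.2.2.1 hyu hyv hy.2.2.2.1).elim
  -- (6,3)
  · rw [hy] at hadj; exact hx.2.2.2.2.2.1 hadj
  -- (6,4)
  · rw [hy] at hadj; exact hx.2.2.2.2.2.2 hadj
  -- (6,5)
  · obtain ⟨h1y, h2y, h3y, hdy, hey, hory⟩ := hy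
    obtain ⟨hyd, hye⟩ := h5 y h1y h2y h3y hdy hey hory
    obtain ⟨u, v, huv, hud, hue, hvd, hve, hyu, hyv, hxcl⟩ := pairT y h1y h2y h3y
    obtain ⟨hxa, hxb, hxc⟩ := hqT x hx
    obtain ⟨hxu, hxv⟩ := hxcl x hxa hxb hxc
    exact (lemB hP huv hud hvd hyu hyv hyd hadj hx.2.2.2.2.2.1 hxu hxv hx.2.2.2.1).elim
  -- (6,6)
  · have hxm := hxle2 x hx
    have hym := hxle2 y hy
    have hne : x ≠ y := G.ne_of_adj hadj
    have hone : ordf x ≠ ordf y := fun hh => hne (ordf_inj hh)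
    rcases lt_or_gt_of_ne hone with hlt | hlt
    · have := hmono x y hx hy hadj hlt
      omega
    · have := hmono y x hy hx hadj.symm hlt
      omega

end Main2

theorem chromatic_le_six_of_K3P2 {V : Type*} [Fintype V] (G : SimpleGraph V)
    (hP : ¬ Contains G P3P2) (hK : ¬ Contains G (completeGraph (Fin 4)))
    (hc : Contains G K3P2) :
    G.chromaticNumber ≤ 6 := by
  obtain ⟨f⟩ := hc
  have h01 : G.Adj (f 0) (f 1) := f.map_rel_iff.mpr (by simp [K3P2])
  have h02 : G.Adj (f 0) (f 2) := f.map_rel_iff.mpr (by simp [K3P2])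
  have h12 : G.Adj (f 1) (f 2) := f.map_rel_iff.mpr (by simp [K3P2])
  have h34 : G.Adj (f 3) (f 4) := f.map_rel_iff.mpr (by simp [K3P2])
  have n03 : ¬ G.Adj (f 0) (f 3) := fun h => (by simp [K3P2] : ¬ K3P2.Adj 0 3) (f.map_rel_iff.mp h)
  have n04 : ¬ G.Adj (f 0) (f 4) := fun h => (by simp [K3P2] : ¬ K3P2.Adj 0 4) (f.map_rel_iff.mp h)
  have n13 : ¬ G.Adj (f 1) (f 3) := fun h => (by simp [K3P2] : ¬ K3P2.Adj 1 3) (f.map_rel_iff.mp h)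
  have n14 : ¬ G.Adj (f 1) (f 4) := fun h => (by simp [K3P2] : ¬ K3P2.Adj 1 4) (f.map_rel_iff.mp h)
  have n23 : ¬ G.Adj (f 2) (f 3) := fun h => (by simp [K3P2] : ¬ K3P2.Adj 2 3) (f.map_rel_iff.mp h)
  have n24 : ¬ G.Adj (f 2) (f 4) := fun h => (by simp [K3P2] : ¬ K3P2.Adj 2 4) (f.map_rel_iff.mp h)
  exact mainCore G hP hK (f 0) (f 1) (f 2) (f 3) (f 4) h01 h02 h12 h34 n03 n04 n13 n14 n23 n24
end

section
/- Let G be a (P₃∪P₂, K₄)-free graph and let D₁ := {x ∈ V(G) : ω(G − N(x)) ≤ 2}. For any two nonadjacent vertices y₁, y₂ ∈ D₁, the induced subgraph G[N(y₁) \ N(y₂)] has clique number at most 1 (i.e., contains no edge), and likewise G[N(y₂) \ N(y₁)] has clique number at most 1. -/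
open SimpleGraph

lemma key {V : Type*} [Fintype V] (G : SimpleGraph V) (y₁ y₂ : V)
    (hy₂ : y₂ ∈ D1 G) (hnadj : ¬ G.Adj y₂ y₁) :
    (G.induce (G.neighborSet y₁ \ G.neighborSet y₂)).cliqueNum ≤ 1 := by
  classical
  by_contra h
  push_neg at h
  obtain ⟨s, hs⟩ := (G.induce (G.neighborSet y₁ \ G.neighborSet y₂)).exists_isNClique_cliqueNum
  have hcard : 2 ≤ s.card := by rw [hs.card_eq]; omega
  obtain ⟨a, ha, b, hb, hab⟩ := Finset.one_lt_card.mp hcard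
  have hadj : G.Adj (a : V) (b : V) := hs.isClique ha hb hab
  have haprop := a.2
  have hbprop := b.2
  simp only [Set.mem_diff, mem_neighborSet] at haprop hbprop
  -- build 3-clique in G.induce {y | ¬ G.Adj y₂ y}
  set S : Set V := {y : V | ¬ G.Adj y₂ y}
  have hy1S : (y₁ : V) ∈ S := hnadj
  have haS : (a : V) ∈ S := haprop.2
  have hbS : (b : V) ∈ S := hbprop.2
  have hay : (a : V) ≠ y₁ := (haprop.1).ne'
  have hby : (b : V) ≠ y₁ := (hbprop.1).ne'
  have habV : (a : V) ≠ (b : V) := hadj.ne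
  have htc : (G.induce S).IsClique ({⟨y₁, hy1S⟩, ⟨a, haS⟩, ⟨b, hbS⟩} : Finset S) := by
    intro x hx y hy hxy
    simp only [Finset.coe_insert, Set.mem_insert_iff, Finset.coe_singleton,
      Set.mem_singleton_iff] at hx hy
    have key2 : ∀ u v : S, G.Adj u v → (G.induce S).Adj u v := fun u v h => h
    rcases hx with rfl | rfl | rfl <;> rcases hy with rfl | rfl | rfl <;>
      first
      | exact absurd rfl hxy
      | (apply key2; first
          | exact haprop.1.symm | exact hbprop.1.symm | exact haprop.1 | exact hbprop.1
          | exact hadj | exact hadj.symm)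
  have hcard3 : ({⟨y₁, hy1S⟩, ⟨a, haS⟩, ⟨b, hbS⟩} : Finset S).card = 3 := by
    rw [Finset.card_insert_of_notMem, Finset.card_insert_of_notMem, Finset.card_singleton]
    · simp [Subtype.ext_iff, habV]
    · simp [Subtype.ext_iff, hay.symm, hby.symm]
  have := htc.card_le_cliqueNum
  rw [hcard3] at this
  have h2 : (G.induce S).cliqueNum ≤ 2 := hy₂
  omega

theorem cliqueNum_diff_nbhd_le_one {V : Type*} [Fintype V] (G : SimpleGraph V)
    (hP : ¬ Contains G P3P2) (hK : ¬ Contains G (completeGraph (Fin 4)))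
    (y₁ y₂ : V) (hy₁ : y₁ ∈ D1 G) (hy₂ : y₂ ∈ D1 G)
    (hne : y₁ ≠ y₂) (hnadj : ¬ G.Adj y₁ y₂) :
    (G.induce (G.neighborSet y₁ \ G.neighborSet y₂)).cliqueNum ≤ 1 ∧
      (G.induce (G.neighborSet y₂ \ G.neighborSet y₁)).cliqueNum ≤ 1 :=
  ⟨key G y₁ y₂ hy₂ (fun h => hnadj h.symm), key G y₂ y₁ hy₁ hnadj⟩
end

section
/- Let G be a graph whose vertex set is partitioned into three nonempty subsets V₁, V₂, V₃ such that: G[V₁] and G[V₂] are (K₃, P₃)-free; G[V₃] is a stable set; G[V₁∪V₂] is K₃-free; G[Vⱼ∪V₃] is (K₃, P₃)-free for j = 1, 2; for every vertex v ∈ Vᵢ with i ∈ {1,2}, the set M(v) \ Vᵢ contains no edge, where M(v) is the set of vertices distinct from v and nonadjacent to v; and for every vertex v ∈ V₃ and each i ∈ {1,2}, if N(v)∩Vᵢ ≠ ∅ then N(v)∩Vᵢ = {x ∈ Vᵢ : x is not complete to N(v)∩V₃₋ᵢ}. If moreover G[V₁] has at most one edge, then χ(G) ≤ 3. -/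
open SimpleGraph

section Helpers
variable {V : Type*} {G : SimpleGraph V}

lemma contains_K3_of {S : Set V} {x y z : V} (hx : x ∈ S) (hy : y ∈ S) (hz : z ∈ S)
    (hxy : G.Adj x y) (hyz : G.Adj y z) (hxz : G.Adj x z) :
    Contains (G.induce S) (completeGraph (Fin 3)) := by
  refine ⟨⟨⟨![⟨x,hx⟩,⟨y,hy⟩,⟨z,hz⟩], ?_⟩, ?_⟩⟩
  · intro i j h
    fin_cases i <;> fin_cases j <;>
      simp_all [hxy.ne, hyz.ne, hxz.ne, hxy.ne', hyz.ne', hxz.ne']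
  · intro i j
    change G.Adj ((![⟨x,hx⟩,⟨y,hy⟩,⟨z,hz⟩] : Fin 3 → S) i).1 ((![⟨x,hx⟩,⟨y,hy⟩,⟨z,hz⟩] : Fin 3 → S) j).1 ↔ _
    fin_cases i <;> fin_cases j <;>
      simp_all [completeGraph, hxy.ne, hyz.ne, hxz.ne, hxy.ne', hyz.ne', hxz.ne',
        hxy.symm, hyz.symm, hxz.symm, G.irrefl]

lemma contains_P3_of {S : Set V} {x y z : V} (hx : x ∈ S) (hy : y ∈ S) (hz : z ∈ S)
    (hxy : G.Adj x y) (hyz : G.Adj y z) (hxz : ¬ G.Adj x z) (hne : x ≠ z) :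
    Contains (G.induce S) P3 := by
  have h1 : ∀ i j : Fin 3, P3.Adj i j ↔
      (i = 0 ∧ j = 1) ∨ (i = 1 ∧ j = 0) ∨ (i = 1 ∧ j = 2) ∨ (i = 2 ∧ j = 1) := by
    intro i j
    simp only [P3, fromEdgeSet_adj, Set.mem_insert_iff, Set.mem_singleton_iff, Sym2.eq,
      Sym2.rel_iff', Prod.mk.injEq, Prod.swap_prod_mk]
    fin_cases i <;> fin_cases j <;> decide
  have hzx : ¬ G.Adj z x := fun h => hxz h.symm
  refine ⟨⟨⟨![⟨x,hx⟩,⟨y,hy⟩,⟨z,hz⟩], ?_⟩, ?_⟩⟩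
  · intro i j h
    fin_cases i <;> fin_cases j <;>
      simp_all [hxy.ne, hyz.ne, hxy.ne', hyz.ne', hne]
  · intro i j
    change G.Adj ((![⟨x,hx⟩,⟨y,hy⟩,⟨z,hz⟩] : Fin 3 → S) i).1 ((![⟨x,hx⟩,⟨y,hy⟩,⟨z,hz⟩] : Fin 3 → S) j).1 ↔ _
    fin_cases i <;> fin_cases j <;>
      simp_all [h1, hxy, hyz, hxy.symm, hyz.symm, hxz, hzx, G.irrefl, hne]

end Helpers

theorem chromatic_le_three_of_partition {V : Type*} [Fintype V] (G : SimpleGraph V)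
    (V₁ V₂ V₃ : Set V)
    (h1ne : V₁.Nonempty) (h2ne : V₂.Nonempty) (h3ne : V₃.Nonempty)
    (hd12 : Disjoint V₁ V₂) (hd13 : Disjoint V₁ V₃) (hd23 : Disjoint V₂ V₃)
    (hcover : V₁ ∪ V₂ ∪ V₃ = Set.univ)
    (hV1K3 : ¬ Contains (G.induce V₁) (completeGraph (Fin 3)))
    (hV1P3 : ¬ Contains (G.induce V₁) P3)
    (hV2K3 : ¬ Contains (G.induce V₂) (completeGraph (Fin 3)))
    (hV2P3 : ¬ Contains (G.induce V₂) P3)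
    (hV3stable : ∀ x ∈ V₃, ∀ y ∈ V₃, ¬ G.Adj x y)
    (hV12K3 : ¬ Contains (G.induce (V₁ ∪ V₂)) (completeGraph (Fin 3)))
    (hV13K3 : ¬ Contains (G.induce (V₁ ∪ V₃)) (completeGraph (Fin 3)))
    (hV13P3 : ¬ Contains (G.induce (V₁ ∪ V₃)) P3)
    (hV23K3 : ¬ Contains (G.induce (V₂ ∪ V₃)) (completeGraph (Fin 3)))
    (hV23P3 : ¬ Contains (G.induce (V₂ ∪ V₃)) P3)
    (hM1 : ∀ v ∈ V₁, ∀ x ∈ Mset G v \ V₁, ∀ y ∈ Mset G v \ V₁, ¬ G.Adj x y)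
    (hM2 : ∀ v ∈ V₂, ∀ x ∈ Mset G v \ V₂, ∀ y ∈ Mset G v \ V₂, ¬ G.Adj x y)
    (hN1 : ∀ v ∈ V₃, (G.neighborSet v ∩ V₁).Nonempty →
      G.neighborSet v ∩ V₁ = {x ∈ V₁ | ¬ ∀ y ∈ G.neighborSet v ∩ V₂, G.Adj x y})
    (hN2 : ∀ v ∈ V₃, (G.neighborSet v ∩ V₂).Nonempty →
      G.neighborSet v ∩ V₂ = {x ∈ V₂ | ¬ ∀ y ∈ G.neighborSet v ∩ V₁, G.Adj x y})
    (hone : ∀ a b c d : V, a ∈ V₁ → b ∈ V₁ → c ∈ V₁ → d ∈ V₁ →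
      G.Adj a b → G.Adj c d → s(a,b) = s(c,d)) :
    G.chromaticNumber ≤ 3 := by
  classical
  -- basic partition facts
  have htri : ∀ v : V, v ∈ V₁ ∨ v ∈ V₂ ∨ v ∈ V₃ := by
    intro v
    have hv : v ∈ V₁ ∪ V₂ ∪ V₃ := hcover ▸ Set.mem_univ v
    rcases hv with (h | h) | h
    · exact Or.inl h
    · exact Or.inr (Or.inl h)
    · exact Or.inr (Or.inr h)
  have h12 : ∀ v ∈ V₁, v ∉ V₂ := fun v hv => Set.disjoint_left.mp hd12 hv
  have h21 : ∀ v ∈ V₂, v ∉ V₁ := fun v hv => Set.disjoint_right.mp hd12 hv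
  have h13 : ∀ v ∈ V₁, v ∉ V₃ := fun v hv => Set.disjoint_left.mp hd13 hv
  have h23 : ∀ v ∈ V₂, v ∉ V₃ := fun v hv => Set.disjoint_left.mp hd23 hv
  have h31 : ∀ v ∈ V₃, v ∉ V₁ := fun v hv => Set.disjoint_right.mp hd13 hv
  have h32 : ∀ v ∈ V₃, v ∉ V₂ := fun v hv => Set.disjoint_right.mp hd23 hv
  -- no triangle in V₁ ∪ V₂
  have ntri12 : ∀ x y z : V, x ∈ V₁ ∪ V₂ → y ∈ V₁ ∪ V₂ → z ∈ V₁ ∪ V₂ →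
      G.Adj x y → G.Adj y z → G.Adj x z → False :=
    fun x y z hx hy hz h1 h2 h3 => hV12K3 (contains_K3_of hx hy hz h1 h2 h3)
  -- in a (K3,P3)-free induced set, no vertex has two distinct neighbors in the set
  have onenbr : ∀ S : Set V, ¬ Contains (G.induce S) (completeGraph (Fin 3)) →
      ¬ Contains (G.induce S) P3 → ∀ x y z : V, x ∈ S → y ∈ S → z ∈ S →
      G.Adj y x → G.Adj y z → x ≠ z → False := by
    intro S hK hP x y z hx hy hz h1 h2 hne
    by_cases h : G.Adj x z
    · exact hK (contains_K3_of hx hy hz h1.symm h2 h)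
    · exact hP (contains_P3_of hx hy hz h1.symm h2 h hne)
  -- extension of a coloring proper on V₁ ∪ V₂ to all of G
  have ext3 : ∀ c : V → Fin 3,
      (∀ u v : V, u ∉ V₃ → v ∉ V₃ → G.Adj u v → c u ≠ c v) → G.Colorable 3 := by
    intro c hc
    have nb1 : ∀ v ∈ V₃, ∀ x z : V, x ∈ V₁ → z ∈ V₁ → G.Adj v x → G.Adj v z → x = z := by
      intro v hv x z hx hz hax haz
      by_contra hne
      exact onenbr (V₁ ∪ V₃) hV13K3 hV13P3 x v z (Or.inl hx) (Or.inr hv) (Or.inl hz) hax haz hne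
    have nb2 : ∀ v ∈ V₃, ∀ x z : V, x ∈ V₂ → z ∈ V₂ → G.Adj v x → G.Adj v z → x = z := by
      intro v hv x z hx hz hax haz
      by_contra hne
      exact onenbr (V₂ ∪ V₃) hV23K3 hV23P3 x v z (Or.inl hx) (Or.inr hv) (Or.inl hz) hax haz hne
    have key : ∀ v ∈ V₃, ∃ k : Fin 3, ∀ u : V, G.Adj v u → c u ≠ k := by
      intro v hv
      have hsub : ∃ n₁ n₂ : V, ∀ u : V, G.Adj v u → u = n₁ ∨ u = n₂ := by
        by_cases h1 : ∃ x ∈ V₁, G.Adj v x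
        · obtain ⟨n₁, hn₁, ha₁⟩ := h1
          by_cases h2 : ∃ x ∈ V₂, G.Adj v x
          · obtain ⟨n₂, hn₂, ha₂⟩ := h2
            refine ⟨n₁, n₂, fun u hu => ?_⟩
            rcases htri u with h | h | h
            · exact Or.inl (nb1 v hv u n₁ h hn₁ hu ha₁)
            · exact Or.inr (nb2 v hv u n₂ h hn₂ hu ha₂)
            · exact absurd hu (hV3stable v hv u h)
          · refine ⟨n₁, n₁, fun u hu => ?_⟩
            rcases htri u with h | h | h
            · exact Or.inl (nb1 v hv u n₁ h hn₁ hu ha₁)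
            · exact absurd ⟨u, h, hu⟩ h2
            · exact absurd hu (hV3stable v hv u h)
        · by_cases h2 : ∃ x ∈ V₂, G.Adj v x
          · obtain ⟨n₂, hn₂, ha₂⟩ := h2
            refine ⟨n₂, n₂, fun u hu => ?_⟩
            rcases htri u with h | h | h
            · exact absurd ⟨u, h, hu⟩ h1
            · exact Or.inl (nb2 v hv u n₂ h hn₂ hu ha₂)
            · exact absurd hu (hV3stable v hv u h)
          · refine ⟨v, v, fun u hu => ?_⟩
            rcases htri u with h | h | h
            · exact absurd ⟨u, h, hu⟩ h1
            · exact absurd ⟨u, h, hu⟩ h2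
            · exact absurd hu (hV3stable v hv u h)
      obtain ⟨n₁, n₂, hsub⟩ := hsub
      have hfin : ∀ a b : Fin 3, ∃ k : Fin 3, k ≠ a ∧ k ≠ b := by decide
      obtain ⟨k, hk1, hk2⟩ := hfin (c n₁) (c n₂)
      refine ⟨k, fun u hu => ?_⟩
      rcases hsub u hu with rfl | rfl
      · exact fun h => hk1 h.symm
      · exact fun h => hk2 h.symm
    choose k hk using key
    refine ⟨Coloring.mk (fun v => if h : v ∈ V₃ then k v h else c v) ?_⟩
    intro u v huv
    by_cases hu : u ∈ V₃ <;> by_cases hv : v ∈ V₃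
    · exact absurd huv (hV3stable u hu v hv)
    · simp only [dif_pos hu, dif_neg hv]
      exact fun h => hk u hu v huv h.symm
    · simp only [dif_pos hv, dif_neg hu]
      exact fun h => hk v hv u huv.symm h
    · simp only [dif_neg hu, dif_neg hv]
      exact hc u v hu hv huv
  -- now build the coloring on V₁ ∪ V₂
  have hcol : G.Colorable 3 := by
    by_cases hE : ∃ a ∈ V₁, ∃ b ∈ V₁, G.Adj a b
    · obtain ⟨a, ha, b, hb, hab⟩ := hE
      set c : V → Fin 3 := fun v =>
        if v ∈ V₁ then (if v = a then 0 else if v = b then 1 else 2)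
        else if G.Adj a v then 1 else 0 with hcdef
      have mainA : ∀ u v : V, u ∈ V₁ → v ∈ V₂ → G.Adj u v → c u ≠ c v := by
        intro u v hu1 hv2 huv
        have hv1 : v ∉ V₁ := h21 v hv2
        simp only [hcdef, if_pos hu1, if_neg hv1]
        by_cases hua : u = a
        · subst hua
          rw [if_pos rfl, if_pos huv]
          decide
        · by_cases hub : u = b
          · have hau' : G.Adj a u := by rw [hub]; exact hab
            have hav : ¬ G.Adj a v := fun h =>
              ntri12 a u v (Or.inl ha) (Or.inl hu1) (Or.inr hv2) hau' huv h
            rw [if_neg hua, if_pos hub, if_neg hav]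
            decide
          · rw [if_neg hua, if_neg hub]
            by_cases hav : G.Adj a v
            · rw [if_pos hav]; decide
            · rw [if_neg hav]; decide
      have mainB : ∀ u v : V, u ∈ V₂ → v ∈ V₂ → G.Adj u v → c u ≠ c v := by
        intro u v hu2 hv2 huv
        have hu1 : u ∉ V₁ := h21 u hu2
        have hv1 : v ∉ V₁ := h21 v hv2
        simp only [hcdef, if_neg hu1, if_neg hv1]
        by_cases hau : G.Adj a u <;> by_cases hav : G.Adj a v
        · exact absurd hav fun h =>
            ntri12 a u v (Or.inl ha) (Or.inr hu2) (Or.inr hv2) hau huv h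
        · rw [if_pos hau, if_neg hav]; decide
        · rw [if_neg hau, if_pos hav]; decide
        · have hune : u ≠ a := fun h => h12 a ha (h ▸ hu2)
          have hvne : v ≠ a := fun h => h12 a ha (h ▸ hv2)
          exact absurd huv (hM1 a ha u ⟨⟨hune, hau⟩, hu1⟩ v ⟨⟨hvne, hav⟩, hv1⟩)
      have mainC : ∀ u v : V, u ∈ V₁ → v ∈ V₁ → G.Adj u v → c u ≠ c v := by
        intro u v hu1 hv1 huv
        have := hone u v a b hu1 hv1 ha hb huv hab
        rw [Sym2.eq_iff] at this
        simp only [hcdef, if_pos hu1, if_pos hv1]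
        rcases this with ⟨hua, hvb⟩ | ⟨hub, hva⟩
        · have h2 : v ≠ a := by rw [hvb]; exact hab.ne'
          rw [if_pos hua, if_neg h2, if_pos hvb]; decide
        · have h2 : u ≠ a := by rw [hub]; exact hab.ne'
          rw [if_neg h2, if_pos hub, if_pos hva]; decide
      apply ext3 c
      intro u v hu3 hv3 huv
      rcases htri u with hu | hu | hu
      · rcases htri v with hv | hv | hv
        · exact mainC u v hu hv huv
        · exact mainA u v hu hv huv
        · exact absurd hv hv3
      · rcases htri v with hv | hv | hv
        · exact fun h => mainA v u hv hu huv.symm h.symm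
        · exact mainB u v hu hv huv
        · exact absurd hv hv3
      · exact absurd hu hu3
    · -- V₁ has no edge
      have noE : ∀ x ∈ V₁, ∀ y ∈ V₁, ¬ G.Adj x y := by
        intro x hx y hy h
        exact hE ⟨x, hx, y, hy, h⟩
      let e := Fintype.equivFin V
      set c : V → Fin 3 := fun v =>
        if v ∈ V₁ then 2
        else if ∃ w, w ∈ V₂ ∧ G.Adj v w ∧ e w < e v then 1 else 0 with hcdef
      have hc1 : ∀ v ∈ V₁, c v = 2 := fun v hv => by simp only [hcdef, if_pos hv]
      have hcnot1 : ∀ v, v ∉ V₁ → c v ≠ 2 := by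
        intro v hv
        simp only [hcdef, if_neg hv]
        by_cases h : ∃ w, w ∈ V₂ ∧ G.Adj v w ∧ e w < e v
        · rw [if_pos h]; decide
        · rw [if_neg h]; decide
      have key : ∀ u v : V, u ∈ V₂ → v ∈ V₂ → G.Adj u v → e u < e v → c u ≠ c v := by
        intro u v hu2 hv2 huv hlt
        have hu1 : u ∉ V₁ := h21 u hu2
        have hv1 : v ∉ V₁ := h21 v hv2
        simp only [hcdef, if_neg hu1, if_neg hv1]
        have hcv : ∃ w, w ∈ V₂ ∧ G.Adj v w ∧ e w < e v := ⟨u, hu2, huv.symm, hlt⟩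
        have hcu : ¬ ∃ w, w ∈ V₂ ∧ G.Adj u w ∧ e w < e u := by
          rintro ⟨w, hw2, haw, hlt'⟩
          have hwv : w ≠ v := fun h => lt_asymm hlt (h ▸ hlt')
          exact onenbr V₂ hV2K3 hV2P3 w u v hw2 hu2 hv2 haw huv hwv
        rw [if_neg hcu, if_pos hcv]
        decide
      apply ext3 c
      intro u v hu3 hv3 huv
      rcases htri u with hu | hu | hu
      · rcases htri v with hv | hv | hv
        · exact absurd huv (noE u hu v hv)
        · exact fun h => hcnot1 v (h21 v hv) (h.symm.trans (hc1 u hu))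
        · exact absurd hv hv3
      · rcases htri v with hv | hv | hv
        · intro h
          exact hcnot1 u (h21 u hu) (h.trans (hc1 v hv))
        · rcases lt_trichotomy (e u) (e v) with hlt | heq | hlt
          · exact key u v hu hv huv hlt
          · exact absurd (e.injective heq) huv.ne
          · exact fun h => key v u hv hu huv.symm hlt h.symm
        · exact absurd hv hv3
      · exact absurd hu hu3
  have := hcol.chromaticNumber_le
  exact_mod_cast this
end

section
/- Let G be a (P₃∪P₂, K₄, K₃∪P₂, co-domino, co-A)-free graph and let D₁ := {x ∈ V(G) : ω(G − N(x)) ≤ 2}. If v₁, v₂ ∈ D₁ are nonadjacent, then at least one of the two induced subgraphs G[N(v₁) \ N(v₂)] and G[N(v₂) \ N(v₁)] contains no edge. -/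
open SimpleGraph

theorem one_side_edge_free {V : Type*} [Fintype V] (G : SimpleGraph V)
    (hP : ¬ Contains G P3P2) (hK : ¬ Contains G (completeGraph (Fin 4)))
    (hK3P2 : ¬ Contains G K3P2) (hD : ¬ Contains G coDomino) (hA : ¬ Contains G coA)
    (v₁ v₂ : V) (hv₁ : v₁ ∈ D1 G) (hv₂ : v₂ ∈ D1 G)
    (hne : v₁ ≠ v₂) (hnadj : ¬ G.Adj v₁ v₂) :
    (∀ a ∈ G.neighborSet v₁ \ G.neighborSet v₂,
        ∀ b ∈ G.neighborSet v₁ \ G.neighborSet v₂, ¬ G.Adj a b) ∨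
      (∀ a ∈ G.neighborSet v₂ \ G.neighborSet v₁,
        ∀ b ∈ G.neighborSet v₂ \ G.neighborSet v₁, ¬ G.Adj a b) := by
  classical
  right
  rintro a ⟨ha2, ha1⟩ b ⟨hb2, hb1⟩ hab
  simp only [SimpleGraph.mem_neighborSet] at ha2 ha1 hb2 hb1
  set S : Set V := {y : V | ¬ G.Adj v₁ y} with hS
  have hv₂S : v₂ ∈ S := hnadj
  have haS : a ∈ S := ha1
  have hbS : b ∈ S := hb1
  set x : ↥S := ⟨v₂, hv₂S⟩
  set y : ↥S := ⟨a, haS⟩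
  set z : ↥S := ⟨b, hbS⟩
  have hxy : x ≠ y := by
    intro h; have := congrArg Subtype.val h; simp [x, y] at this
    exact G.irrefl (this ▸ ha2)
  have hxz : x ≠ z := by
    intro h; have := congrArg Subtype.val h; simp [x, z] at this
    exact G.irrefl (this ▸ hb2)
  have hyz : y ≠ z := by
    intro h; have := congrArg Subtype.val h; simp [y, z] at this
    exact G.irrefl (this ▸ hab)
  have hclique : (G.induce S).IsClique ({x, y, z} : Finset ↥S) := by
    intro u hu w hw huw
    simp only [Finset.coe_insert, Set.mem_insert_iff, Finset.coe_singleton,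
      Set.mem_singleton_iff] at hu hw
    rcases hu with rfl | rfl | rfl <;> rcases hw with rfl | rfl | rfl <;>
      first
        | exact absurd rfl huw
        | simp [SimpleGraph.comap_adj, x, y, z, ha2, hb2, hab, ha2.symm, hb2.symm, hab.symm]
  have hcard : ({x, y, z} : Finset ↥S).card = 3 := by
    rw [Finset.card_insert_of_notMem (by simp [hxy, hxz]),
      Finset.card_insert_of_notMem (by simp [hyz]), Finset.card_singleton]
  have h3 : 3 ≤ (G.induce S).cliqueNum := by
    rw [← hcard]
    exact SimpleGraph.IsClique.card_le_cliqueNum (tc := hclique)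
  have h2 : (G.induce S).cliqueNum ≤ 2 := hv₁
  omega
end

section
/- Let G be a (P₃∪P₂, K₄, K₃∪P₂, co-A)-free graph and let v ∈ V(G) be a vertex such that the subgraph G − N(v) induced on the non-neighbors of v contains a triangle. Then χ(G[N(v)]) ≤ 3. -/
open SimpleGraph

section Helpers

set_option maxHeartbeats 1000000

variable {V : Type*} (G : SimpleGraph V)

lemma contains_K4' (p q r s : V)
    (hpq : G.Adj p q) (hpr : G.Adj p r) (hps : G.Adj p s)
    (hqr : G.Adj q r) (hqs : G.Adj q s) (hrs : G.Adj r s) :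
    Contains G (completeGraph (Fin 4)) := by
  refine ⟨⟨⟨fun i => if i = 0 then p else if i = 1 then q else if i = 2 then r else s, ?_⟩, ?_⟩⟩
  · intro i j hij
    fin_cases i <;> fin_cases j <;>
      simp_all [hpq.ne, hpr.ne, hps.ne, hqr.ne, hqs.ne, hrs.ne]
  · intro i j
    fin_cases i <;> fin_cases j <;>
      dsimp only [DFunLike.coe] <;> simp [completeGraph, G.adj_comm, hpq, hpr, hps, hqr, hqs, hrs]

lemma contains_K3P2' (p q r s t : V)
    (hpq : G.Adj p q) (hpr : G.Adj p r) (hqr : G.Adj q r) (hst : G.Adj s t)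
    (hps : ¬G.Adj p s) (hpt : ¬G.Adj p t) (hqs : ¬G.Adj q s) (hqt : ¬G.Adj q t)
    (hrs : ¬G.Adj r s) (hrt : ¬G.Adj r t) : Contains G K3P2 := by
  have h5 : p ≠ s := fun h => hpt (by rw [h]; exact hst)
  have h6 : p ≠ t := fun h => hps (by rw [h]; exact hst.symm)
  have h7 : q ≠ s := fun h => hqt (by rw [h]; exact hst)
  have h8 : q ≠ t := fun h => hqs (by rw [h]; exact hst.symm)
  have h9 : r ≠ s := fun h => hrt (by rw [h]; exact hst)
  have h10 : r ≠ t := fun h => hrs (by rw [h]; exact hst.symm)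
  refine ⟨⟨⟨fun i => if i = 0 then p else if i = 1 then q else if i = 2 then r
      else if i = 3 then s else t, ?_⟩, ?_⟩⟩
  · intro i j hij
    fin_cases i <;> fin_cases j <;>
      simp_all [hpq.ne, hpr.ne, hqr.ne, hst.ne]
  · intro i j
    fin_cases i <;> fin_cases j <;>
      dsimp only [DFunLike.coe] <;> simp [K3P2, G.adj_comm, hpq, hpr, hqr, hst, hps, hpt, hqs, hqt, hrs, hrt]

lemma contains_coA' (p0 p1 p2 p3 p4 p5 : V)
    (h01 : G.Adj p0 p1) (h12 : G.Adj p1 p2) (h23 : G.Adj p2 p3) (h34 : G.Adj p3 p4)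
    (h45 : G.Adj p4 p5) (h05 : G.Adj p0 p5) (h13 : G.Adj p1 p3) (h04 : G.Adj p0 p4)
    (h03 : G.Adj p0 p3)
    (n02 : ¬G.Adj p0 p2) (n14 : ¬G.Adj p1 p4) (n15 : ¬G.Adj p1 p5)
    (n24 : ¬G.Adj p2 p4) (n25 : ¬G.Adj p2 p5) (n35 : ¬G.Adj p3 p5) :
    Contains G coA := by
  have e02 : p0 ≠ p2 := fun h => n24 (by rw [← h]; exact h04)
  have e14 : p1 ≠ p4 := fun h => n24 (by rw [← h]; exact h12.symm)
  have e15 : p1 ≠ p5 := fun h => n25 (by rw [← h]; exact h12.symm)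
  have e24 : p2 ≠ p4 := fun h => n14 (by rw [← h]; exact h12)
  have e25 : p2 ≠ p5 := fun h => n15 (by rw [← h]; exact h12)
  have e35 : p3 ≠ p5 := fun h => n25 (by rw [← h]; exact h23)
  refine ⟨⟨⟨fun i => if i = 0 then p0 else if i = 1 then p1 else if i = 2 then p2
      else if i = 3 then p3 else if i = 4 then p4 else p5, ?_⟩, ?_⟩⟩
  · intro i j hij
    fin_cases i <;> fin_cases j <;>
      simp_all [h01.ne, h12.ne, h23.ne, h34.ne, h45.ne, h05.ne, h13.ne, h04.ne, h03.ne]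
  · intro i j
    fin_cases i <;> fin_cases j <;>
      dsimp only [DFunLike.coe] <;> simp [coA, G.adj_comm, h01, h12, h23, h34, h45, h05, h13, h04, h03,
        n02, n14, n15, n24, n25, n35]

open Classical in
/-- The coloring of a vertex `x` by its adjacency pattern to the triangle `a b c`. -/
noncomputable def triColor (a b c x : V) : Fin 3 :=
  if G.Adj x a then (if G.Adj x b then 2 else 1)
  else if G.Adj x b then (if G.Adj x c then 0 else 2) else 0

lemma triColor_conflict
    (hK : ¬ Contains G (completeGraph (Fin 4)))
    (hK3P2 : ¬ Contains G K3P2) (hA : ¬ Contains G coA)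
    (v a b c x y : V)
    (hab : G.Adj a b) (hac : G.Adj a c) (hbc : G.Adj b c)
    (hva : ¬ G.Adj v a) (hvb : ¬ G.Adj v b) (hvc : ¬ G.Adj v c)
    (hvx : G.Adj v x) (hvy : G.Adj v y) (hxy : G.Adj x y)
    (hcol : triColor G a b c x = triColor G a b c y) : False := by
  by_cases hxa : G.Adj x a <;> by_cases hxb : G.Adj x b <;> by_cases hxc : G.Adj x c <;>
    by_cases hya : G.Adj y a <;> by_cases hyb : G.Adj y b <;> by_cases hyc : G.Adj y c <;>
    simp only [triColor, hxa, hxb, hxc, hya, hyb, hyc, if_true, if_false, ite_true,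
      ite_false] at hcol <;> try exact absurd hcol (by decide)
  -- 1 (111,111): K4 a b c x
  · exact hK (contains_K4' G a b c x hab hac hxa.symm hbc hxb.symm hxc.symm)
  -- 2 (111,110): K4 a b c x
  · exact hK (contains_K4' G a b c x hab hac hxa.symm hbc hxb.symm hxc.symm)
  -- 3 (111,010): K4 a b c x
  · exact hK (contains_K4' G a b c x hab hac hxa.symm hbc hxb.symm hxc.symm)
  -- 4 (110,111): K4 a b c y
  · exact hK (contains_K4' G a b c y hab hac hya.symm hbc hyb.symm hyc.symm)
  -- 5 (110,110): K4 a b x y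
  · exact hK (contains_K4' G a b x y hab hxa.symm hya.symm hxb.symm hyb.symm hxy)
  -- 6 (110,010): coA (b,y,v,x,a,c)
  · exact hA (contains_coA' G b y v x a c hyb.symm hvy.symm hvx hxa hac hbc hxy.symm
      hab.symm hxb.symm (fun h => hvb h.symm) hya hyc hva hvc hxc)
  -- 7 (101,101): K4 a c x y
  · exact hK (contains_K4' G a c x y hac hxa.symm hya.symm hxc.symm hyc.symm hxy)
  -- 8 (101,100): coA (a,y,v,x,c,b)
  · exact hA (contains_coA' G a y v x c b hya.symm hvy.symm hvx hxc hbc.symm hab hxy.symm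
      hac hxa.symm (fun h => hva h.symm) hyc hyb hvc hvb hxb)
  -- 9 (100,101): coA (a,x,v,y,c,b)
  · exact hA (contains_coA' G a x v y c b hxa.symm hvx.symm hvy hyc hbc.symm hab hxy
      hac hya.symm (fun h => hva h.symm) hxc hxb hvc hvb hyb)
  -- 10 (100,100): K3P2 (v,x,y)(b,c)
  · exact hK3P2 (contains_K3P2' G v x y b c hvx hvy hxy hbc hvb hvc hxb hxc hyb hyc)
  -- 11 (011,011): K4 b c x y
  · exact hK (contains_K4' G b c x y hbc hxb.symm hyb.symm hxc.symm hyc.symm hxy)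
  -- 12 (011,001): coA (c,y,v,x,b,a)
  · exact hA (contains_coA' G c y v x b a hyc.symm hvy.symm hvx hxb hab.symm hac.symm
      hxy.symm hbc.symm hxc.symm (fun h => hvc h.symm) hyb hya hvb hva hxa)
  -- 13 (011,000): K3P2 (a,b,c)(v,y)
  · exact hK3P2 (contains_K3P2' G a b c v y hab hac hbc hvy
      (fun h => hva h.symm) (fun h => hya h.symm) (fun h => hvb h.symm)
      (fun h => hyb h.symm) (fun h => hvc h.symm) (fun h => hyc h.symm))
  -- 14 (010,111): K4 a b c y
  · exact hK (contains_K4' G a b c y hab hac hya.symm hbc hyb.symm hyc.symm)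
  -- 15 (010,110): coA (b,x,v,y,a,c)
  · exact hA (contains_coA' G b x v y a c hxb.symm hvx.symm hvy hya hac hbc hxy
      hab.symm hyb.symm (fun h => hvb h.symm) hxa hxc hva hvc hyc)
  -- 16 (010,010): K3P2 (v,x,y)(a,c)
  · exact hK3P2 (contains_K3P2' G v x y a c hvx hvy hxy hac hva hvc hxa hxc hya hyc)
  -- 17 (001,011): coA (c,x,v,y,b,a)
  · exact hA (contains_coA' G c x v y b a hxc.symm hvx.symm hvy hyb hab.symm hac.symm
      hxy hbc.symm hyc.symm (fun h => hvc h.symm) hxb hxa hvb hva hya)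
  -- 18 (001,001): K3P2 (v,x,y)(a,b)
  · exact hK3P2 (contains_K3P2' G v x y a b hvx hvy hxy hab hva hvb hxa hxb hya hyb)
  -- 19 (001,000): K3P2 (v,x,y)(a,b)
  · exact hK3P2 (contains_K3P2' G v x y a b hvx hvy hxy hab hva hvb hxa hxb hya hyb)
  -- 20 (000,011): K3P2 (a,b,c)(v,x)
  · exact hK3P2 (contains_K3P2' G a b c v x hab hac hbc hvx
      (fun h => hva h.symm) (fun h => hxa h.symm) (fun h => hvb h.symm)
      (fun h => hxb h.symm) (fun h => hvc h.symm) (fun h => hxc h.symm))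
  -- 21 (000,001): K3P2 (v,x,y)(a,b)
  · exact hK3P2 (contains_K3P2' G v x y a b hvx hvy hxy hab hva hvb hxa hxb hya hyb)
  -- 22 (000,000): K3P2 (v,x,y)(a,b)
  · exact hK3P2 (contains_K3P2' G v x y a b hvx hvy hxy hab hva hvb hxa hxb hya hyb)

end Helpers

theorem chromatic_nbhd_le_three {V : Type*} [Fintype V] (G : SimpleGraph V)
    (hP : ¬ Contains G P3P2) (hK : ¬ Contains G (completeGraph (Fin 4)))
    (hK3P2 : ¬ Contains G K3P2) (hA : ¬ Contains G coA)
    (v : V)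
    (htri : Contains (G.induce {y : V | ¬ G.Adj v y}) (completeGraph (Fin 3))) :
    (G.induce (G.neighborSet v)).chromaticNumber ≤ 3 := by
  obtain ⟨e⟩ := htri
  set S : Set V := {y : V | ¬ G.Adj v y}
  have hadj : ∀ i j : Fin 3, i ≠ j → G.Adj ((e i) : V) ((e j) : V) := by
    intro i j hij
    have := e.map_rel_iff.mpr (show (completeGraph (Fin 3)).Adj i j from hij)
    exact this
  have hab : G.Adj ((e 0 : S) : V) ((e 1 : S) : V) := hadj 0 1 (by decide)
  have hac : G.Adj ((e 0 : S) : V) ((e 2 : S) : V) := hadj 0 2 (by decide)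
  have hbc : G.Adj ((e 1 : S) : V) ((e 2 : S) : V) := hadj 1 2 (by decide)
  have hva : ¬ G.Adj v ((e 0 : S) : V) := (e 0).2
  have hvb : ¬ G.Adj v ((e 1 : S) : V) := (e 1).2
  have hvc : ¬ G.Adj v ((e 2 : S) : V) := (e 2).2
  have hcolor : (G.induce (G.neighborSet v)).Colorable 3 := by
    refine ⟨Coloring.mk (fun x => triColor G ((e 0 : S) : V) ((e 1 : S) : V) ((e 2 : S) : V)
      ((x : V))) ?_⟩
    intro x y hxy hcol
    have hxy' : G.Adj (x : V) (y : V) := hxy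
    exact triColor_conflict G hK hK3P2 hA v _ _ _ (x : V) (y : V)
      hab hac hbc hva hvb hvc x.2 y.2 hxy' hcol
  have := hcolor.chromaticNumber_le
  exact_mod_cast this
end

section
/- Let G be a (P₃∪P₂, K₄)-free graph, let D₁ := {x ∈ V(G) : ω(G − N(x)) ≤ 2}, and let v₁, v₂, v₃ ∈ D₁ be such that v₁ is adjacent to v₂ and v₃ is adjacent to neither v₁ nor v₂. Then χ(G[N(v₁) ∪ N(v₂)]) ≤ 5. -/
open SimpleGraph

lemma three_le_cliqueNum_induce {V : Type*} [Fintype V] (G : SimpleGraph V) (S : Set V)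
    {a b c : V} (ha : a ∈ S) (hb : b ∈ S) (hc : c ∈ S)
    (hab : G.Adj a b) (hac : G.Adj a c) (hbc : G.Adj b c) :
    3 ≤ (G.induce S).cliqueNum := by
  classical
  haveI : Fintype S := Fintype.ofFinite _
  have hclique : (G.induce S).IsClique ({⟨a, ha⟩, ⟨b, hb⟩, ⟨c, hc⟩} : Finset S) := by
    intro x hx y hy hxy
    simp only [Finset.coe_insert, Set.mem_insert_iff, Finset.coe_singleton,
      Set.mem_singleton_iff] at hx hy
    rcases hx with rfl | rfl | rfl <;> rcases hy with rfl | rfl | rfl <;>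
      first
        | exact absurd rfl hxy
        | simpa [comap_adj] using hab
        | simpa [comap_adj] using hab.symm
        | simpa [comap_adj] using hac
        | simpa [comap_adj] using hac.symm
        | simpa [comap_adj] using hbc
        | simpa [comap_adj] using hbc.symm
  have hcard : ({⟨a, ha⟩, ⟨b, hb⟩, ⟨c, hc⟩} : Finset S).card = 3 := by
    rw [Finset.card_insert_of_notMem, Finset.card_insert_of_notMem, Finset.card_singleton]
    · simp [Subtype.ext_iff, hbc.ne]
    · simp [Subtype.ext_iff, hab.ne, hac.ne]
  calc 3 = ({⟨a, ha⟩, ⟨b, hb⟩, ⟨c, hc⟩} : Finset S).card := hcard.symm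
    _ ≤ (G.induce S).cliqueNum := IsClique.card_le_cliqueNum (tc := hclique)

lemma k4_embedding {V : Type*} (G : SimpleGraph V) {a b c d : V}
    (hab : G.Adj a b) (hac : G.Adj a c) (had : G.Adj a d)
    (hbc : G.Adj b c) (hbd : G.Adj b d) (hcd : G.Adj c d) :
    Nonempty ((completeGraph (Fin 4)) ↪g G) := by
  refine ⟨⟨⟨![a, b, c, d], ?_⟩, ?_⟩⟩
  · intro i j hij
    fin_cases i <;> fin_cases j <;>
      simp_all [hab.ne, hac.ne, had.ne, hbc.ne, hbd.ne, hcd.ne,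
        hab.ne', hac.ne', had.ne', hbc.ne', hbd.ne', hcd.ne']
  · intro i j
    show G.Adj (![a, b, c, d] i) (![a, b, c, d] j) ↔ (completeGraph (Fin 4)).Adj i j
    fin_cases i <;> fin_cases j <;>
      simp [completeGraph, hab, hac, had, hbc, hbd, hcd,
        hab.symm, hac.symm, had.symm, hbc.symm, hbd.symm, hcd.symm]


theorem chromatic_union_nbhd_le_five {V : Type*} [Fintype V] (G : SimpleGraph V)
    (hP : ¬ Contains G P3P2) (hK : ¬ Contains G (completeGraph (Fin 4)))
    (v₁ v₂ v₃ : V) (hv₁ : v₁ ∈ D1 G) (hv₂ : v₂ ∈ D1 G) (hv₃ : v₃ ∈ D1 G)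
    (hadj : G.Adj v₁ v₂) (h31 : v₃ ≠ v₁) (h32 : v₃ ≠ v₂)
    (hn1 : ¬ G.Adj v₃ v₁) (hn2 : ¬ G.Adj v₃ v₂) :
    (G.induce (G.neighborSet v₁ ∪ G.neighborSet v₂)).chromaticNumber ≤ 5 := by
  classical
  -- from D1 membership: no triangle among vertices all nonadjacent to x
  have noTri : ∀ x ∈ D1 G, ∀ a b c : V, ¬ G.Adj x a → ¬ G.Adj x b → ¬ G.Adj x c →
      G.Adj a b → G.Adj a c → G.Adj b c → False := by
    intro x hx a b c hxa hxb hxc hab hac hbc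
    have h3 := three_le_cliqueNum_induce G {y : V | ¬ G.Adj x y} hxa hxb hxc hab hac hbc
    have := le_trans h3 hx
    omega
  have noK4 : ∀ a b c d : V, G.Adj a b → G.Adj a c → G.Adj a d →
      G.Adj b c → G.Adj b d → G.Adj c d → False := by
    intro a b c d hab hac had hbc hbd hcd
    exact hK (k4_embedding G hab hac had hbc hbd hcd)
  have hn1' : ¬ G.Adj v₁ v₃ := fun h => hn1 h.symm
  have hn2' : ¬ G.Adj v₂ v₃ := fun h => hn2 h.symm
  rw [show (5 : ℕ∞) = ((5 : ℕ) : ℕ∞) by norm_cast, chromaticNumber_le_iff_colorable]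
  refine ⟨Coloring.mk (fun x => if G.Adj v₁ ↑x then
      (if G.Adj v₂ ↑x then 0 else if G.Adj v₃ ↑x then 1 else 2)
    else (if G.Adj v₃ ↑x then 3 else 4)) ?_⟩
  intro a b hab heq
  have hab' : G.Adj ↑a ↑b := hab
  have ha2 : G.Adj v₁ ↑a ∨ G.Adj v₂ ↑a := by
    have h := a.2; simp only [Set.mem_union, mem_neighborSet] at h; exact h
  have hb2 : G.Adj v₁ ↑b ∨ G.Adj v₂ ↑b := by
    have h := b.2; simp only [Set.mem_union, mem_neighborSet] at h; exact h
  by_cases h1a : G.Adj v₁ ↑a <;> by_cases h1b : G.Adj v₁ ↑b <;>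
    by_cases h2a : G.Adj v₂ ↑a <;> by_cases h2b : G.Adj v₂ ↑b <;>
    by_cases h3a : G.Adj v₃ ↑a <;> by_cases h3b : G.Adj v₃ ↑b <;>
    simp only [h1a, h1b, h2a, h2b, h3a, h3b, if_true, if_false, if_pos, if_neg,
      not_false_iff] at heq <;>
    first
      | exact absurd heq (by decide)
      | exact noK4 v₁ v₂ ↑a ↑b hadj h1a h1b h2a h2b hab'
      | exact noTri v₂ hv₂ ↑a ↑b v₃ (fun h => h2a h.symm |>.elim) (fun h => h2b h.symm |>.elim) hn2' hab' h3a.symm h3b.symm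
      | exact noTri v₂ hv₂ ↑a ↑b v₃ h2a h2b hn2' hab' h3a.symm h3b.symm
      | exact noTri v₃ hv₃ v₁ ↑a ↑b hn1 h3a h3b h1a h1b hab'
      | exact noTri v₁ hv₁ ↑a ↑b v₃ h1a h1b hn1' hab' h3a.symm h3b.symm
      | exact noTri v₃ hv₃ v₂ ↑a ↑b hn2 h3a h3b h2a h2b hab'
      | exact (ha2.resolve_left h1a |> fun h => absurd h h2a)
      | exact (hb2.resolve_left h1b |> fun h => absurd h h2b)
end
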